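/- Let Φ ∈ Δ₂ with Φ̃ ∈ Δ₂ ∩ Δ′, Q ⊂ ℝ^{N₁} and Q₂ ⊂ ℝ^{N₂} bounded open sets. If u ∈ L^Φ(Q×Q₂) then for a.e. x₁ ∈ Q, u(x₁,·) ∈ L^Φ(Q₂), and u belongs to the Orlicz–Bochner space L^Φ(Q, L^Φ(Q₂)) with ‖u‖_{L^Φ(Q,L^Φ(Q₂))} ≤ ∬_{Q×Q₂} Φ(|u(x₁,x₂)|) dx₁ dx₂ + β, where β is the Δ′-constant of Φ̃. -/

import Mathlib

open MeasureTheory Filter Set Topology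

noncomputable def luxNorm {α : Type*} [MeasurableSpace α] (Φ : ℝ → ℝ) (μ : Measure α)
    (f : α → ℝ) : ℝ :=
  sInf {δ : ℝ | 0 < δ ∧ ∫⁻ a, ENNReal.ofReal (Φ (|f a| / δ)) ∂μ ≤ 1}

def MemLPhi {α : Type*} [MeasurableSpace α] (Φ : ℝ → ℝ) (μ : Measure α) (f : α → ℝ) : Prop :=
  Measurable f ∧ ∃ δ > 0, ∫⁻ a, ENNReal.ofReal (Φ (|f a| / δ)) ∂μ < ⊤

structure IsYoung (Φ : ℝ → ℝ) : Prop where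
  continuousOn : ContinuousOn Φ (Ici 0)
  convexOn : ConvexOn ℝ (Ici 0) Φ
  map_zero : Φ 0 = 0
  pos : ∀ t > 0, 0 < Φ t
  tendsto_zero : Tendsto (fun t => Φ t / t) (𝓝[>] (0:ℝ)) (𝓝 0)
  tendsto_top : Tendsto (fun t => Φ t / t) atTop atTop

structure IsYoungDensity (Φ φ : ℝ → ℝ) : Prop where
  mono : MonotoneOn φ (Ici 0)
  rightCont : ∀ t ≥ 0, ContinuousWithinAt φ (Ici t) t
  map_zero : φ 0 = 0
  pos : ∀ t > 0, 0 < φ t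
  tendsto_top : Tendsto φ atTop atTop
  repr : ∀ t ≥ 0, Φ t = ∫ τ in (0:ℝ)..t, φ τ

noncomputable def youngConj (Φ : ℝ → ℝ) (t : ℝ) : ℝ :=
  sSup {y : ℝ | ∃ s ≥ (0:ℝ), y = s * t - Φ s}

def Delta2 (Φ : ℝ → ℝ) : Prop := ∃ t₀ > 0, ∃ k > 2, ∀ t ≥ t₀, Φ (2 * t) ≤ k * Φ t

def DeltaPrime (Φ : ℝ → ℝ) : Prop :=
  ∃ β > 0, ∀ t ≥ (0:ℝ), ∀ s ≥ (0:ℝ), Φ (t * s) ≤ β * Φ t * Φ s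

private lemma phi_nonneg {Φ : ℝ → ℝ} (hY : IsYoung Φ) {t : ℝ} (ht : 0 ≤ t) : 0 ≤ Φ t := by
  rcases ht.eq_or_lt with h | h
  · simp [← h, hY.map_zero]
  · exact (hY.pos t h).le

private lemma young_bdd {Φ : ℝ → ℝ} (hY : IsYoung Φ) (b : ℝ) :
    BddAbove {y : ℝ | ∃ s ≥ (0:ℝ), y = s * b - Φ s} := by
  obtain ⟨M, hM⟩ := Filter.eventually_atTop.mp (hY.tendsto_top.eventually_ge_atTop (|b| + 1))
  refine ⟨max M 1 * |b|, ?_⟩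
  rintro y ⟨s, hs, rfl⟩
  by_cases hsM : s ≤ max M 1
  · have h1 : s * b ≤ s * |b| := mul_le_mul_of_nonneg_left (le_abs_self b) hs
    have h2 : s * |b| ≤ max M 1 * |b| := mul_le_mul_of_nonneg_right hsM (abs_nonneg b)
    have := phi_nonneg hY hs
    linarith
  · push_neg at hsM
    have hs1 : (1:ℝ) ≤ s := le_trans (le_max_right M 1) hsM.le
    have hMs : M ≤ s := le_trans (le_max_left M 1) hsM.le
    have := hM s hMs
    have hspos : (0:ℝ) < s := lt_of_lt_of_le one_pos hs1
    rw [le_div_iff₀ hspos] at this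
    have h1 : s * b ≤ s * |b| := mul_le_mul_of_nonneg_left (le_abs_self b) hspos.le
    have h2 : (0:ℝ) ≤ max M 1 * |b| :=
      mul_nonneg (le_trans zero_le_one (le_max_right M 1)) (abs_nonneg b)
    nlinarith [abs_nonneg b]

private lemma young_le {Φ : ℝ → ℝ} (hY : IsYoung Φ) {a : ℝ} (ha : 0 ≤ a) (b : ℝ) :
    a * b - Φ a ≤ youngConj Φ b :=
  le_csSup (young_bdd hY b) ⟨a, ha, rfl⟩

private lemma youngConj_nonneg {Φ : ℝ → ℝ} (hY : IsYoung Φ) (b : ℝ) :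
    0 ≤ youngConj Φ b := by
  have := young_le hY (le_refl (0:ℝ)) b
  simpa [hY.map_zero] using this

private lemma exists_subgrad {Φ : ℝ → ℝ} (hY : IsYoung Φ) {t : ℝ} (ht : 0 < t) :
    ∃ c, 0 ≤ c ∧ ∀ s, 0 ≤ s → Φ t + c * (s - t) ≤ Φ s := by
  set T : Set ℝ := (fun s => (Φ t - Φ s) / (t - s)) '' (Ico 0 t) with hT
  have hne : T.Nonempty := ⟨_, ⟨0, ⟨le_rfl, ht⟩, rfl⟩⟩
  have hub : ∀ z, t < z → ∀ m ∈ T, m ≤ (Φ z - Φ t) / (z - t) := by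
    rintro z hz m ⟨s, ⟨hs0, hst⟩, rfl⟩
    exact hY.convexOn.slope_mono_adjacent hs0 (le_trans ht.le hz.le) hst hz
  have hbdd : BddAbove T := ⟨_, fun m hm => hub (t + 1) (by linarith) m hm⟩
  set c := sSup T with hc
  have hmem0 : (Φ t - Φ 0) / (t - 0) ∈ T := ⟨0, ⟨le_rfl, ht⟩, rfl⟩
  have hc0 : Φ t / t ≤ c := by
    have := le_csSup hbdd hmem0
    simpa [hY.map_zero] using this
  refine ⟨c, le_trans (div_nonneg (phi_nonneg hY ht.le) ht.le) hc0, ?_⟩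
  intro s hs0
  rcases lt_trichotomy s t with h | h | h
  · have hm : (Φ t - Φ s) / (t - s) ≤ c := le_csSup hbdd ⟨s, ⟨hs0, h⟩, rfl⟩
    have hts : (0:ℝ) < t - s := by linarith
    rw [div_le_iff₀ hts] at hm
    nlinarith
  · subst h; simp
  · have hm : c ≤ (Φ s - Φ t) / (s - t) := csSup_le hne (hub s h)
    have hst : (0:ℝ) < s - t := by linarith
    rw [le_div_iff₀ hst] at hm
    nlinarith

private lemma youngConj_le_sub {Φ : ℝ → ℝ} (hY : IsYoung Φ) {t c : ℝ}
    (hsub : ∀ s, 0 ≤ s → Φ t + c * (s - t) ≤ Φ s) :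
    youngConj Φ c ≤ t * c - Φ t := by
  unfold youngConj
  have hne : {y : ℝ | ∃ s ≥ (0:ℝ), y = s * c - Φ s}.Nonempty := ⟨0 * c - Φ 0, 0, le_rfl, rfl⟩
  apply csSup_le hne
  rintro y ⟨s, hs, rfl⟩
  have := hsub s hs
  nlinarith

private lemma key_pointwise {Φ : ℝ → ℝ} (hY : IsYoung Φ) {β : ℝ} (hβ : 0 < β)
    (hΔ' : ∀ t ≥ (0:ℝ), ∀ s ≥ (0:ℝ), youngConj Φ (t * s) ≤ β * youngConj Φ t * youngConj Φ s)
    {δ δ₀ : ℝ} (hδ : 0 < δ) (hβδ₀ : β ≤ δ₀) {c : ℝ} (hc : 0 ≤ c)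
    (hsub : ∀ s, 0 ≤ s → Φ (δ / δ₀) + c * (s - δ / δ₀) ≤ Φ s)
    {a : ℝ} (ha : 0 ≤ a) : δ * c * Φ (a / δ) ≤ Φ a := by
  have hδ₀ : 0 < δ₀ := lt_of_lt_of_le hβ hβδ₀
  rcases ha.eq_or_lt with h | h
  · have ha0 : a = 0 := h.symm
    subst ha0
    simp [hY.map_zero]
  · set w := a / δ with hw
    have hw0 : 0 < w := div_pos h hδ
    obtain ⟨g, hg0, hgsub⟩ := exists_subgrad hY hw0
    have h1 : youngConj Φ g ≤ w * g - Φ w := by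
      have := youngConj_le_sub hY hgsub
      linarith [this]
    have h2 : a * (g * c) - Φ a ≤ youngConj Φ (g * c) := young_le hY h.le _
    have h3 : youngConj Φ (g * c) ≤ β * youngConj Φ g * youngConj Φ c := hΔ' g hg0 c hc
    have h4 : youngConj Φ c ≤ (δ / δ₀) * c - Φ (δ / δ₀) := youngConj_le_sub hY hsub
    have h5 : youngConj Φ c ≤ (δ / δ₀) * c :=
      le_trans h4 (by linarith [phi_nonneg hY (div_nonneg hδ.le hδ₀.le)])
    have hg' : 0 ≤ youngConj Φ g := youngConj_nonneg hY g
    have hc' : 0 ≤ youngConj Φ c := youngConj_nonneg hY c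
    have haw : δ * w = a := by rw [hw]; field_simp
    have htβ : β * (δ / δ₀) ≤ δ := by
      rw [← mul_div_assoc, div_le_iff₀ hδ₀]
      nlinarith
    have hint1 : δ * c * Φ w ≤ δ * c * (w * g - youngConj Φ g) :=
      mul_le_mul_of_nonneg_left (by linarith) (mul_nonneg hδ.le hc)
    have hint0 : δ * c * (w * g - youngConj Φ g) = a * (g * c) - δ * c * youngConj Φ g := by
      rw [← haw]; ring
    have hint2 : β * youngConj Φ g * youngConj Φ c ≤ β * youngConj Φ g * ((δ / δ₀) * c) :=
      mul_le_mul_of_nonneg_left h5 (mul_nonneg hβ.le hg')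
    have hint3 : β * (δ / δ₀) * (youngConj Φ g * c) ≤ δ * (youngConj Φ g * c) :=
      mul_le_mul_of_nonneg_right htβ (mul_nonneg hg' hc)
    nlinarith [hint1, hint0, hint2, hint3, h2, h3]

private lemma phi_lux_le {Φ : ℝ → ℝ} (hY : IsYoung Φ) {β : ℝ} (hβ : 0 < β)
    (hΔ' : ∀ t ≥ (0:ℝ), ∀ s ≥ (0:ℝ), youngConj Φ (t * s) ≤ β * youngConj Φ t * youngConj Φ s)
    {α : Type*} [MeasurableSpace α] {ν : Measure α} {v : α → ℝ}
    {δ₀ : ℝ} (hβδ₀ : β ≤ δ₀)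
    (hR : (∫⁻ y, ENNReal.ofReal (Φ |v y|) ∂ν) ≠ ⊤) :
    Φ (luxNorm Φ ν v / δ₀) ≤ (∫⁻ y, ENNReal.ofReal (Φ |v y|) ∂ν).toReal / δ₀ := by
  have hδ₀ : 0 < δ₀ := lt_of_lt_of_le hβ hβδ₀
  set R : ENNReal := ∫⁻ y, ENNReal.ofReal (Φ |v y|) ∂ν with hRdef
  set f := luxNorm Φ ν v with hfdef
  have hf0 : 0 ≤ f := Real.sInf_nonneg fun x hx => hx.1.le
  have hRt : 0 ≤ R.toReal := ENNReal.toReal_nonneg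
  have key : ∀ δ, 0 < δ → δ < f → Φ (δ / δ₀) ≤ R.toReal / δ₀ := by
    intro δ hδ hδf
    have hmem : δ ∉ {δ : ℝ | 0 < δ ∧ ∫⁻ a, ENNReal.ofReal (Φ (|v a| / δ)) ∂ν ≤ 1} := by
      intro hm
      exact absurd (csInf_le ⟨0, fun x hx => hx.1.le⟩ hm) (not_le.mpr hδf)
    have hm1 : (1:ENNReal) ≤ ∫⁻ y, ENNReal.ofReal (Φ (|v y| / δ)) ∂ν := by
      by_contra hcon
      push_neg at hcon
      exact hmem ⟨hδ, hcon.le⟩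
    obtain ⟨c, hc0, hsub⟩ := exists_subgrad hY (div_pos hδ hδ₀)
    have hpt : ∀ y, ENNReal.ofReal (δ * c) * ENNReal.ofReal (Φ (|v y| / δ)) ≤
        ENNReal.ofReal (Φ |v y|) := by
      intro y
      rw [← ENNReal.ofReal_mul (mul_nonneg hδ.le hc0)]
      exact ENNReal.ofReal_le_ofReal
        (key_pointwise hY hβ hΔ' hδ hβδ₀ hc0 hsub (abs_nonneg _))
    have hineq : ENNReal.ofReal (δ * c) ≤ R := by
      calc ENNReal.ofReal (δ * c) = ENNReal.ofReal (δ * c) * 1 := (mul_one _).symm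
        _ ≤ ENNReal.ofReal (δ * c) * ∫⁻ y, ENNReal.ofReal (Φ (|v y| / δ)) ∂ν :=
            mul_le_mul_right hm1 _
        _ = ∫⁻ y, ENNReal.ofReal (δ * c) * ENNReal.ofReal (Φ (|v y| / δ)) ∂ν :=
            (lintegral_const_mul' _ _ ENNReal.ofReal_ne_top).symm
        _ ≤ ∫⁻ y, ENNReal.ofReal (Φ |v y|) ∂ν := lintegral_mono hpt
    have hδc : δ * c ≤ R.toReal := by
      have h' := ENNReal.toReal_mono hR hineq
      rwa [ENNReal.toReal_ofReal (mul_nonneg hδ.le hc0)] at h'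
    have hΦt : Φ (δ / δ₀) ≤ δ / δ₀ * c := by
      have := hsub 0 le_rfl
      rw [hY.map_zero] at this
      nlinarith
    calc Φ (δ / δ₀) ≤ δ / δ₀ * c := hΦt
      _ = δ * c / δ₀ := by ring
      _ ≤ R.toReal / δ₀ := by gcongr
  rcases hf0.eq_or_lt with h0 | hfpos
  · rw [← h0, zero_div, hY.map_zero]
    exact div_nonneg hRt hδ₀.le
  · set G : ℝ → ℝ := fun s => Φ (max (s / δ₀) 0) with hGdef
    have hGcont : Continuous G :=
      hY.continuousOn.comp_continuous
        ((continuous_id.div_const δ₀).max continuous_const) fun x => Set.mem_Ici.mpr (le_max_right _ _)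
    have hlim : Tendsto G (𝓝[<] f) (𝓝 (G f)) :=
      (hGcont.tendsto f).mono_left nhdsWithin_le_nhds
    have hev : ∀ᶠ δ in 𝓝[<] f, G δ ≤ R.toReal / δ₀ := by
      filter_upwards [self_mem_nhdsWithin,
        mem_nhdsWithin_of_mem_nhds (Ioi_mem_nhds hfpos)] with δ h1 h2
      have hδpos : (0:ℝ) < δ := h2
      have := key δ hδpos h1
      simpa [hGdef, max_eq_left (div_nonneg hδpos.le hδ₀.le)] using this
    have hfinal := le_of_tendsto hlim hev
    simpa [hGdef, max_eq_left (div_nonneg hf0 hδ₀.le)] using hfinal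

private lemma meas_ofReal_phi {Φ : ℝ → ℝ} (hY : IsYoung Φ) {α : Type*} [MeasurableSpace α]
    {g : α → ℝ} (hg : Measurable g) (hg0 : ∀ x, 0 ≤ g x) :
    Measurable fun x => ENNReal.ofReal (Φ (g x)) := by
  have hc : Continuous fun s : ℝ => Φ (max s 0) :=
    hY.continuousOn.comp_continuous (continuous_id.max continuous_const) fun x =>
      Set.mem_Ici.mpr (le_max_right _ _)
  have heq : (fun x => ENNReal.ofReal (Φ (g x))) =
      fun x => ENNReal.ofReal (Φ (max (g x) 0)) := by
    funext x; rw [max_eq_left (hg0 x)]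
  rw [heq]
  exact ENNReal.measurable_ofReal.comp (hc.measurable.comp hg)


theorem stmt19 {N₁ N₂ : ℕ} (Φ : ℝ → ℝ) (hY : IsYoung Φ)
    (hΔ : Delta2 Φ) (hΔconj : Delta2 (youngConj Φ))
    (Q : Set (EuclideanSpace ℝ (Fin N₁))) (hQo : IsOpen Q) (hQb : Bornology.IsBounded Q)
    (Q₂ : Set (EuclideanSpace ℝ (Fin N₂))) (hQ₂o : IsOpen Q₂) (hQ₂b : Bornology.IsBounded Q₂)
    (β : ℝ) (hβ : 0 < β)
    (hΔ'conj : ∀ t ≥ (0:ℝ), ∀ s ≥ (0:ℝ),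
      youngConj Φ (t * s) ≤ β * youngConj Φ t * youngConj Φ s)
    (u : EuclideanSpace ℝ (Fin N₁) × EuclideanSpace ℝ (Fin N₂) → ℝ)
    (hum : Measurable u)
    (hu : MemLPhi Φ ((volume.restrict Q).prod (volume.restrict Q₂)) u) :
    (∀ᵐ x₁ ∂(volume.restrict Q),
        MemLPhi Φ (volume.restrict Q₂) fun x₂ => u (x₁, x₂)) ∧
      ENNReal.ofReal (luxNorm Φ (volume.restrict Q)
          (fun x₁ => luxNorm Φ (volume.restrict Q₂) fun x₂ => u (x₁, x₂))) ≤
        (∫⁻ p, ENNReal.ofReal (Φ |u p|) ∂((volume.restrict Q).prod (volume.restrict Q₂))) +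
          ENNReal.ofReal β := by
  set μ := volume.restrict Q with hμ
  set ν := volume.restrict Q₂ with hν
  obtain ⟨hum', δ₁, hδ₁, hfin⟩ := hu
  constructor
  · -- a.e. membership
    have hmeas1 : Measurable fun p : EuclideanSpace ℝ (Fin N₁) × EuclideanSpace ℝ (Fin N₂) =>
        ENNReal.ofReal (Φ (|u p| / δ₁)) :=
      meas_ofReal_phi hY (hum.abs.div_const δ₁) fun p => div_nonneg (abs_nonneg _) hδ₁.le
    have hTon1 : (∫⁻ p, ENNReal.ofReal (Φ (|u p| / δ₁)) ∂(μ.prod ν)) =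
        ∫⁻ x, ∫⁻ y, ENNReal.ofReal (Φ (|u (x, y)| / δ₁)) ∂ν ∂μ :=
      lintegral_prod _ hmeas1.aemeasurable
    have hifin : ∀ᵐ x ∂μ, (∫⁻ y, ENNReal.ofReal (Φ (|u (x, y)| / δ₁)) ∂ν) < ⊤ := by
      apply ae_lt_top hmeas1.lintegral_prod_right'
      rw [← hTon1]
      exact hfin.ne
    filter_upwards [hifin] with x hx
    exact ⟨hum.comp measurable_prodMk_left, δ₁, hδ₁, hx⟩
  · -- norm bound
    set Aen := ∫⁻ p, ENNReal.ofReal (Φ |u p|) ∂(μ.prod ν) with hAen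
    by_cases hA : Aen = ⊤
    · rw [hA, top_add]; exact le_top
    · set A := Aen.toReal with hAdef
      set δ₀ := A + β with hδ₀def
      have hA0 : 0 ≤ A := ENNReal.toReal_nonneg
      have hβδ₀ : β ≤ δ₀ := le_add_of_nonneg_left hA0
      have hδ₀ : 0 < δ₀ := lt_of_lt_of_le hβ hβδ₀
      have hmeas0 : Measurable fun p : EuclideanSpace ℝ (Fin N₁) × EuclideanSpace ℝ (Fin N₂) =>
          ENNReal.ofReal (Φ |u p|) := meas_ofReal_phi hY hum.abs fun p => abs_nonneg _
      have hρmeas : Measurable fun x => ∫⁻ y, ENNReal.ofReal (Φ |u (x, y)|) ∂ν :=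
        hmeas0.lintegral_prod_right'
      have hTon : Aen = ∫⁻ x, ∫⁻ y, ENNReal.ofReal (Φ |u (x, y)|) ∂ν ∂μ :=
        lintegral_prod _ hmeas0.aemeasurable
      have hρfin : ∀ᵐ x ∂μ, (∫⁻ y, ENNReal.ofReal (Φ |u (x, y)|) ∂ν) ≠ ⊤ := by
        have h' := ae_lt_top hρmeas (by rw [← hTon]; exact hA)
        filter_upwards [h'] with x hx using hx.ne
      have hptwise : ∀ᵐ x ∂μ,
          ENNReal.ofReal (Φ (|luxNorm Φ ν fun y => u (x, y)| / δ₀)) ≤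
          ENNReal.ofReal ((∫⁻ y, ENNReal.ofReal (Φ |u (x, y)|) ∂ν).toReal / δ₀) := by
        filter_upwards [hρfin] with x hx
        have hlux0 : 0 ≤ luxNorm Φ ν fun y => u (x, y) :=
          Real.sInf_nonneg fun z hz => hz.1.le
        rw [abs_of_nonneg hlux0]
        exact ENNReal.ofReal_le_ofReal (phi_lux_le hY hβ hΔ'conj hβδ₀ hx)
      have houter : (∫⁻ x, ENNReal.ofReal
          (Φ (|luxNorm Φ ν fun y => u (x, y)| / δ₀)) ∂μ) ≤ 1 := by
        calc (∫⁻ x, ENNReal.ofReal (Φ (|luxNorm Φ ν fun y => u (x, y)| / δ₀)) ∂μ)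
            ≤ ∫⁻ x, ENNReal.ofReal
              ((∫⁻ y, ENNReal.ofReal (Φ |u (x, y)|) ∂ν).toReal / δ₀) ∂μ :=
              lintegral_mono_ae hptwise
          _ = ∫⁻ x, (∫⁻ y, ENNReal.ofReal (Φ |u (x, y)|) ∂ν) * ENNReal.ofReal δ₀⁻¹ ∂μ := by
              apply lintegral_congr_ae
              filter_upwards [hρfin] with x hx
              rw [div_eq_mul_inv, ENNReal.ofReal_mul ENNReal.toReal_nonneg,
                ENNReal.ofReal_toReal hx]
          _ = (∫⁻ x, ∫⁻ y, ENNReal.ofReal (Φ |u (x, y)|) ∂ν ∂μ) * ENNReal.ofReal δ₀⁻¹ :=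
              lintegral_mul_const' _ _ ENNReal.ofReal_ne_top
          _ = Aen * ENNReal.ofReal δ₀⁻¹ := by rw [← hTon]
          _ ≤ 1 := by
              rw [← ENNReal.ofReal_toReal hA, ← hAdef, ← ENNReal.ofReal_mul hA0]
              apply ENNReal.ofReal_le_one.mpr
              rw [← div_eq_mul_inv]
              apply div_le_one_of_le₀ (by linarith) hδ₀.le
      have hmemS : δ₀ ∈ {δ : ℝ | 0 < δ ∧
          (∫⁻ x, ENNReal.ofReal
            (Φ (|luxNorm Φ ν fun y => u (x, y)| / δ)) ∂μ) ≤ 1} := ⟨hδ₀, houter⟩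
      have hlux_le : luxNorm Φ μ (fun x => luxNorm Φ ν fun y => u (x, y)) ≤ δ₀ :=
        csInf_le ⟨0, fun z hz => hz.1.le⟩ hmemS
      calc ENNReal.ofReal (luxNorm Φ μ fun x => luxNorm Φ ν fun y => u (x, y))
          ≤ ENNReal.ofReal δ₀ := ENNReal.ofReal_le_ofReal hlux_le
        _ = ENNReal.ofReal A + ENNReal.ofReal β := ENNReal.ofReal_add hA0 hβ.le
        _ = Aen + ENNReal.ofReal β := by rw [hAdef, ENNReal.ofReal_toReal hA]
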